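/- Work in E = EuclideanSpace ℝ (Fin 3). Fix a safety distance r > 0, a constant c > r, positive gains k_p, k_v, k_o, constants 0 < ε < η, and continuously differentiable functions h_p, h_v : ℝ → ℝ with ε ≤ h_p(s) ≤ η and ε ≤ h_v(s) ≤ η for all s. Let Ω* : ℝ → (E →ₗ[ℝ] E) be continuous and pointwise skew-adjoint, and let e* : ℝ → E be differentiable with ‖e*(t)‖ = c and (e*)'(t) = Ω*(t)(e*(t)) for all t. Let ẽ, ν̃ : ℝ → E be differentiable; set e(t) = ẽ(t) + e*(t), d(t) = ‖e(t)‖ − r, g(t) = e(t)/‖e(t)‖, φ(t) = ⟪g(t), ν̃(t)⟫/d(t), and L(t) = (k_p/2)·∫₀^{‖ẽ(t)‖²} h_p(s) ds + (1/2)·‖ν̃(t)‖². Suppose that at some t ≥ 0 one has d(t) > 0 and the closed-loop equations ẽ'(t) = Ω*(t)ẽ(t) + ν̃(t) and ν̃'(t) = −Ω*(t)ν̃(t) − k_p·h_p(‖ẽ(t)‖²)·ẽ(t) − k_v·h_v(‖ν̃(t)‖)·ν̃(t) − k_o·φ(t)·g(t) hold at t. Then L is differentiable at t with L'(t) = −k_v·h_v(‖ν̃(t)‖)·‖ν̃(t)‖²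 − k_o·⟪g(t), ν̃(t)⟫²/d(t) ≤ 0. -/

import Mathlib

open Filter
open scoped RealInnerProductSpace

local notation "E" => EuclideanSpace ℝ (Fin 3)

/-- Lyapunov dissipation computation (equation (10)) in the proof of
Lemma 2: along the closed-loop dynamics of the two-agent system, the
Lyapunov function `L = (k_p/2)∫₀^{‖ẽ‖²} h_p + (1/2)‖ν̃‖²` has derivative
`L' = -k_v h_v(‖ν̃‖) ‖ν̃‖² - k_o ⟪g, ν̃⟫²/d ≤ 0`. -/
theorem lyapunov_dissipation
    (r c k_p k_v k_o ε η : ℝ)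
    (hr : 0 < r) (hc : r < c) (hkp : 0 < k_p) (hkv : 0 < k_v) (hko : 0 < k_o)
    (hε : 0 < ε) (hεη : ε < η)
    (h_p h_v : ℝ → ℝ) (hhp : ContDiff ℝ 1 h_p) (hhv : ContDiff ℝ 1 h_v)
    (hhp_bd : ∀ s, ε ≤ h_p s ∧ h_p s ≤ η) (hhv_bd : ∀ s, ε ≤ h_v s ∧ h_v s ≤ η)
    (Ω : ℝ → E →L[ℝ] E) (hΩc : Continuous Ω)
    (hΩskew : ∀ t (x y : E), ⟪Ω t x, y⟫ = -⟪x, Ω t y⟫)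
    (estar : ℝ → E) (hestar : Differentiable ℝ estar)
    (hestar_norm : ∀ t, ‖estar t‖ = c)
    (hestar_dyn : ∀ t, deriv estar t = Ω t (estar t))
    (etil νtil : ℝ → E)
    (hetil : Differentiable ℝ etil) (hνtil : Differentiable ℝ νtil)
    (e : ℝ → E) (he : ∀ t, e t = etil t + estar t)
    (d : ℝ → ℝ) (hd : ∀ t, d t = ‖e t‖ - r)
    (g : ℝ → E) (hg : ∀ t, g t = ‖e t‖⁻¹ • e t)
    (φ : ℝ → ℝ) (hφ : ∀ t, φ t = ⟪g t, νtil t⟫ / d t)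
    (L : ℝ → ℝ)
    (hL : ∀ t, L t = (k_p / 2) * (∫ s in (0:ℝ)..(‖etil t‖ ^ 2), h_p s)
      + (1 / 2) * ‖νtil t‖ ^ 2)
    (t : ℝ) (ht : 0 ≤ t) (hdt : 0 < d t)
    (heq1 : deriv etil t = Ω t (etil t) + νtil t)
    (heq2 : deriv νtil t = -(Ω t (νtil t)) - (k_p * h_p (‖etil t‖ ^ 2)) • etil t
      - (k_v * h_v ‖νtil t‖) • νtil t - (k_o * φ t) • g t) :
    HasDerivAt L
      (-(k_v * h_v ‖νtil t‖) * ‖νtil t‖ ^ 2 - k_o * ⟪g t, νtil t⟫ ^ 2 / d t) t ∧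
    -(k_v * h_v ‖νtil t‖) * ‖νtil t‖ ^ 2 - k_o * ⟪g t, νtil t⟫ ^ 2 / d t ≤ 0 := by
  have hdne : d t ≠ 0 := ne_of_gt hdt
  set a := etil t with ha
  set v := νtil t with hv0
  have hE : HasDerivAt etil (Ω t a + v) t := heq1 ▸ (hetil t).hasDerivAt
  have hV : HasDerivAt νtil (-(Ω t v) - (k_p * h_p (‖a‖ ^ 2)) • a
      - (k_v * h_v ‖v‖) • v - (k_o * φ t) • g t) t := heq2 ▸ (hνtil t).hasDerivAt
  have hN : HasDerivAt (fun τ => ‖etil τ‖ ^ 2)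
      (⟪a, Ω t a + v⟫ + ⟪Ω t a + v, a⟫) t := by
    have h := hE.inner ℝ hE
    simp only [real_inner_self_eq_norm_sq] at h
    exact h
  have hM : HasDerivAt (fun τ => ‖νtil τ‖ ^ 2)
      (⟪v, -(Ω t v) - (k_p * h_p (‖a‖ ^ 2)) • a - (k_v * h_v ‖v‖) • v - (k_o * φ t) • g t⟫
       + ⟪-(Ω t v) - (k_p * h_p (‖a‖ ^ 2)) • a - (k_v * h_v ‖v‖) • v - (k_o * φ t) • g t, v⟫) t := by
    have h := hV.inner ℝ hV
    simp only [real_inner_self_eq_norm_sq] at h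
    exact h
  have hFTC : HasDerivAt (fun x => ∫ s in (0:ℝ)..x, h_p s) (h_p (‖a‖ ^ 2)) (‖a‖ ^ 2) :=
    intervalIntegral.integral_hasDerivAt_right
      (hhp.continuous.intervalIntegrable _ _)
      (hhp.continuous.stronglyMeasurableAtFilter _ _)
      hhp.continuous.continuousAt
  have hInt : HasDerivAt (fun τ => ∫ s in (0:ℝ)..(‖etil τ‖ ^ 2), h_p s)
      (h_p (‖a‖ ^ 2) * (⟪a, Ω t a + v⟫ + ⟪Ω t a + v, a⟫)) t :=
    HasDerivAt.comp (h₂ := fun x => ∫ s in (0:ℝ)..x, h_p s) (h := fun τ => ‖etil τ‖ ^ 2) t hFTC hN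
  have hLfun : L = fun τ => (k_p / 2) * (∫ s in (0:ℝ)..(‖etil τ‖ ^ 2), h_p s)
      + (1 / 2) * ‖νtil τ‖ ^ 2 := funext hL
  have key : HasDerivAt L
      ((k_p / 2) * (h_p (‖a‖ ^ 2) * (⟪a, Ω t a + v⟫ + ⟪Ω t a + v, a⟫))
       + (1 / 2) * (⟪v, -(Ω t v) - (k_p * h_p (‖a‖ ^ 2)) • a - (k_v * h_v ‖v‖) • v - (k_o * φ t) • g t⟫
       + ⟪-(Ω t v) - (k_p * h_p (‖a‖ ^ 2)) • a - (k_v * h_v ‖v‖) • v - (k_o * φ t) • g t, v⟫)) t := by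
    rw [hLfun]
    exact (hInt.const_mul _).add (hM.const_mul _)
  have skew_a : ⟪Ω t a, a⟫ = 0 := by
    have h1 := hΩskew t a a
    have h2 : ⟪Ω t a, a⟫ = ⟪a, Ω t a⟫ := real_inner_comm _ _
    linarith
  have skew_v : ⟪Ω t v, v⟫ = 0 := by
    have h1 := hΩskew t v v
    have h2 : ⟪Ω t v, v⟫ = ⟪v, Ω t v⟫ := real_inner_comm _ _
    linarith
  have skew_a' : ⟪a, Ω t a⟫ = 0 := (real_inner_comm _ _).trans skew_a
  have skew_v' : ⟪v, Ω t v⟫ = 0 := (real_inner_comm _ _).trans skew_v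
  have hav : ⟪v, a⟫ = ⟪a, v⟫ := real_inner_comm _ _
  have hgv : ⟪v, g t⟫ = ⟪g t, v⟫ := real_inner_comm _ _
  have hval : (k_p / 2) * (h_p (‖a‖ ^ 2) * (⟪a, Ω t a + v⟫ + ⟪Ω t a + v, a⟫))
       + (1 / 2) * (⟪v, -(Ω t v) - (k_p * h_p (‖a‖ ^ 2)) • a - (k_v * h_v ‖v‖) • v - (k_o * φ t) • g t⟫
       + ⟪-(Ω t v) - (k_p * h_p (‖a‖ ^ 2)) • a - (k_v * h_v ‖v‖) • v - (k_o * φ t) • g t, v⟫)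
      = -(k_v * h_v ‖v‖) * ‖v‖ ^ 2 - k_o * ⟪g t, v⟫ ^ 2 / d t := by
    simp only [inner_add_left, inner_add_right, inner_sub_left, inner_sub_right,
      inner_neg_left, inner_neg_right, real_inner_smul_left, real_inner_smul_right,
      skew_a, skew_v, skew_a', skew_v', real_inner_self_eq_norm_sq, hav, hgv, hφ t]
    generalize ⟪a, (v:E)⟫ = A
    generalize hG : ⟪g t, (v:E)⟫ = G
    field_simp
    ring
  refine ⟨hval ▸ key, ?_⟩
  have h1 : 0 ≤ k_v * h_v ‖v‖ * ‖v‖ ^ 2 := by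
    have hpos : (0:ℝ) ≤ h_v ‖v‖ := le_trans hε.le (hhv_bd ‖v‖).1
    exact mul_nonneg (mul_nonneg hkv.le hpos) (sq_nonneg _)
  have h2 : 0 ≤ k_o * ⟪g t, v⟫ ^ 2 / d t :=
    div_nonneg (mul_nonneg hko.le (sq_nonneg _)) hdt.le
  linarith
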